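/- Let H be a real inner product space, let E₁ : H → ℝ be convex and differentiable with gradient ∇E₁ (i.e., E₁ has a gradient at every point), let E₂ : H → ℝ be concave and differentiable with gradient ∇E₂, let τ > 0, and let u, u⁺ ∈ H satisfy the implicit–explicit one-step relation ⟨(u⁺ − u)/τ, u⁺ − u⟩ + ⟨∇E₁(u⁺), u⁺ − u⟩ + ⟨∇E₂(u), u⁺ − u⟩ = 0. Then the total energy E = E₁ + E₂ satisfies the unconditional stability estimate E(u⁺) + τ ‖(u⁺ − u)/τ‖² ≤ E(u). -/

import Mathlib

open Filter Topology

lemma convex_grad_ineq {H : Type*} [NormedAddCommGroup H] [InnerProductSpace ℝ H]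
    [CompleteSpace H] (f : H → ℝ) (g x y : H)
    (hf : ConvexOn ℝ Set.univ f) (hg : HasGradientAt f g x) :
    (inner ℝ g (y - x) : ℝ) ≤ f y - f x := by
  set F : ℝ → ℝ := fun t => f (x + t • (y - x)) with hF
  have hL : HasDerivAt (fun t : ℝ => x + t • (y - x)) (y - x) 0 := by
    simpa using ((hasDerivAt_id (0:ℝ)).smul_const (y - x)).const_add x
  have hfd : HasFDerivAt f ((InnerProductSpace.toDual ℝ H) g) x := hg.hasFDerivAt
  have hfd' : HasFDerivAt f ((InnerProductSpace.toDual ℝ H) g) (x + (0:ℝ) • (y - x)) := by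
    simpa using hfd
  have hD : HasDerivAt F (inner ℝ g (y - x) : ℝ) 0 := by
    have h := hfd'.comp_hasDerivAt 0 hL
    simp only [InnerProductSpace.toDual_apply_apply] at h
    exact h
  have hslope : Tendsto (slope F 0) (𝓝[≠] 0) (𝓝 (inner ℝ g (y - x) : ℝ)) :=
    hasDerivAt_iff_tendsto_slope.1 hD
  have hslope' : Tendsto (slope F 0) (𝓝[>] 0) (𝓝 (inner ℝ g (y - x) : ℝ)) :=
    hslope.mono_left (nhdsWithin_mono _ (fun t ht => ne_of_gt ht))
  have hev : ∀ᶠ t in 𝓝[>] (0:ℝ), slope F 0 t ≤ f y - f x := by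
    filter_upwards [Ioo_mem_nhdsGT_of_mem (by norm_num : (0:ℝ) ∈ Set.Ico 0 1)] with t ht
    have ht0 : 0 < t := ht.1
    have ht1 : t < 1 := ht.2
    have hconv := hf.2 (Set.mem_univ x) (Set.mem_univ y) (by linarith : (0:ℝ) ≤ 1 - t)
      (le_of_lt ht0) (by ring)
    have hFt : F t ≤ (1 - t) * f x + t * f y := by
      have : (1 - t) • x + t • y = x + t • (y - x) := by
        module
      simpa [hF, this] using hconv
    have hF0 : F 0 = f x := by simp [hF]
    rw [slope_def_field]
    have hsub : F t - F 0 ≤ (f y - f x) * t := by rw [hF0]; nlinarith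
    calc (F t - F 0) / (t - 0) = (F t - F 0) / t := by norm_num
      _ ≤ (f y - f x) := by rw [div_le_iff₀ ht0]; linarith
  have := le_of_tendsto hslope' hev
  exact this

/-- Abstract one-step unconditional stability of the implicit–explicit scheme: if `E₁` is
convex and `E₂` is concave, both differentiable with gradients `g₁`, `g₂`, and the step
`u ↦ u⁺` satisfies `⟨(u⁺−u)/τ, u⁺−u⟩ + ⟨∇E₁(u⁺), u⁺−u⟩ + ⟨∇E₂(u), u⁺−u⟩ = 0`, then the total
energy `E = E₁ + E₂` satisfies `E(u⁺) + τ‖(u⁺−u)/τ‖² ≤ E(u)`. -/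
theorem imex_one_step_energy_stability
    {H : Type*} [NormedAddCommGroup H] [InnerProductSpace ℝ H] [CompleteSpace H]
    (E₁ E₂ : H → ℝ) (g₁ g₂ : H → H)
    (hE₁ : ConvexOn ℝ Set.univ E₁) (hg₁ : ∀ x, HasGradientAt E₁ (g₁ x) x)
    (hE₂ : ConcaveOn ℝ Set.univ E₂) (hg₂ : ∀ x, HasGradientAt E₂ (g₂ x) x)
    (τ : ℝ) (hτ : 0 < τ) (u uplus : H)
    (hrel : (inner ℝ ((1 / τ) • (uplus - u)) (uplus - u) : ℝ)
        + (inner ℝ (g₁ uplus) (uplus - u) : ℝ)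
        + (inner ℝ (g₂ u) (uplus - u) : ℝ) = 0) :
    E₁ uplus + E₂ uplus + τ * ‖(1 / τ) • (uplus - u)‖ ^ 2 ≤ E₁ u + E₂ u := by
  have h1 : (inner ℝ (g₁ uplus) (u - uplus) : ℝ) ≤ E₁ u - E₁ uplus :=
    convex_grad_ineq E₁ (g₁ uplus) uplus u hE₁ (hg₁ uplus)
  have hgneg : HasGradientAt (-E₂) (-(g₂ u)) u := by
    rw [hasGradientAt_iff_hasFDerivAt]
    simpa [map_neg] using (hg₂ u).hasFDerivAt.neg
  have h2 : (inner ℝ (-(g₂ u)) (uplus - u) : ℝ) ≤ (-E₂) uplus - (-E₂) u :=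
    convex_grad_ineq (-E₂) (-(g₂ u)) u uplus hE₂.neg hgneg
  have e1 : (inner ℝ (g₁ uplus) (u - uplus) : ℝ) = -(inner ℝ (g₁ uplus) (uplus - u) : ℝ) := by
    rw [← inner_neg_right]; congr 1; abel
  have e2 : (inner ℝ (-(g₂ u)) (uplus - u) : ℝ) = -(inner ℝ (g₂ u) (uplus - u) : ℝ) := by
    rw [inner_neg_left]
  have hnorm : (inner ℝ ((1 / τ) • (uplus - u)) (uplus - u) : ℝ)
      = (1 / τ) * ‖uplus - u‖ ^ 2 := by
    rw [real_inner_smul_left, real_inner_self_eq_norm_sq]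
  have hnorm2 : τ * ‖(1 / τ) • (uplus - u)‖ ^ 2 = (1 / τ) * ‖uplus - u‖ ^ 2 := by
    rw [norm_smul, Real.norm_eq_abs, abs_of_pos (one_div_pos.mpr hτ)]
    field_simp
  rw [e1] at h1
  rw [e2] at h2
  simp only [Pi.neg_apply] at h2
  rw [hnorm] at hrel
  rw [hnorm2]
  linarith
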